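/- Fix an integer t ≥ 1 and a real number p with 0 < p < 1/(t+1). If F is a t-intersecting family of subsets of [n], and F' = {T ⊆ [n] : there exists S ∈ F with S ⊆ T} is its upward closure, then μ_p(F') ≤ p^t; that is, the probability that a p-biased subset of [n] contains some member of F is at most p^t. -/

import Mathlib

namespace Stmt13


noncomputable def nu (p : ℝ) (t : ℕ) : ℝ := p ^ t / (1 - p ^ t)
noncomputable def ss (p : ℝ) : ℝ := -(p / (1 - p))
noncomputable def rr (p : ℝ) : ℝ := -((1 - p) / p)
noncomputable def bb (p : ℝ) (t j : ℕ) : ℝ :=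
  nu p t * ((1 - p) / p) * (p / (1 - p)) ^ j * ∑ i ∈ Finset.Ico j t, (p⁻¹) ^ i
noncomputable def Lam (p : ℝ) (t k : ℕ) : ℝ :=
  ss p ^ k * ∑ j ∈ Finset.range t, bb p t j * (k.choose j : ℝ) * rr p ^ j
noncomputable def DD (p : ℝ) (t k : ℕ) : ℝ :=
  ∑ l ∈ Finset.range (k + 1 - t), (k.choose l : ℝ) * (-p) ^ l

section scalar

variable {p : ℝ} {t : ℕ}

lemma hp1 (hp0 : 0 < p) (ht : 1 ≤ t) (hpt : p * (t+1) ≤ 1) : p < 1 := by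
  have h : (1:ℝ) ≤ (t:ℝ) := by exact_mod_cast ht
  by_contra hc
  push_neg at hc
  nlinarith [mul_nonneg (sub_nonneg.mpr hc) (by positivity : (0:ℝ) ≤ (t:ℝ))]

lemma hq0 (hp0 : 0 < p) (ht : 1 ≤ t) (hpt : p * (t+1) ≤ 1) : 0 < 1 - p := by
  have := hp1 hp0 ht hpt; linarith

lemma hpow_lt (hp0 : 0 < p) (hpt : p * (t+1) ≤ 1) (ht : 1 ≤ t) : p ^ t < 1 :=
  pow_lt_one₀ (le_of_lt hp0) (hp1 hp0 ht hpt) (by omega)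

lemma nu_pos (hp0 : 0 < p) (hpt : p * (t+1) ≤ 1) (ht : 1 ≤ t) : 0 < nu p t := by
  have h1 := hpow_lt hp0 hpt ht
  have h2 : 0 < p ^ t := pow_pos hp0 t
  exact div_pos h2 (by linarith)

lemma ss_mul_rr (hp0 : 0 < p) (hq : 0 < 1 - p) : ss p * rr p = 1 := by
  unfold ss rr
  field_simp

lemma bb_of_ge (h : t ≤ j) : bb p t j = 0 := by
  unfold bb
  rw [Finset.Ico_eq_empty (by omega), Finset.sum_empty, mul_zero]

lemma bb_zero (hp0 : 0 < p) (hq : 0 < 1 - p) (ht : 1 ≤ t) : bb p t 0 = 1 := by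
  have hpne : p ≠ 0 := ne_of_gt hp0
  have hpinv : (p⁻¹ : ℝ) ≠ 1 := by
    intro h
    have : p = 1 := by field_simp at h; linarith
    linarith
  have hgeom : ∑ i ∈ Finset.Ico 0 t, (p⁻¹:ℝ) ^ i = ((p⁻¹:ℝ) ^ t - 1) / (p⁻¹ - 1) := by
    rw [show Finset.Ico 0 t = Finset.range t from (Finset.range_eq_Ico t).symm]
    exact geom_sum_eq hpinv t
  have hptne : (1:ℝ) - p ^ t ≠ 0 := by
    have : p ^ t < 1 := pow_lt_one₀ (le_of_lt hp0) (by linarith) (by omega)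
    linarith
  unfold bb nu
  rw [hgeom, pow_zero]
  field_simp
  rw [div_pow, one_pow, mul_sub, mul_one_div_cancel (pow_ne_zero t hpne)]; ring
lemma bb_succ (hp0 : 0 < p) (hq : 0 < 1 - p) {j : ℕ} (hj : j < t) :
    bb p t (j+1) = (p/(1-p)) * bb p t j - nu p t * ((1-p)⁻¹)^j := by
  have hpne : p ≠ 0 := ne_of_gt hp0
  have hqne : (1:ℝ)-p ≠ 0 := ne_of_gt hq
  have hc : ∑ i ∈ Finset.Ico (j+1) t, (p⁻¹:ℝ)^i
      = (∑ i ∈ Finset.Ico j t, (p⁻¹:ℝ)^i) - (p⁻¹)^j := by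
    rw [Finset.sum_eq_sum_Ico_succ_bot hj]; ring
  have key : (p/(1-p))^j * (p⁻¹)^j = ((1-p)⁻¹)^j := by
    rw [← mul_pow]; congr 1; field_simp
  unfold bb
  rw [hc, pow_succ, mul_sub]
  rw [show nu p t * ((1-p)/p) * ((p/(1-p))^j * (p/(1-p))) * (p⁻¹)^j
      = nu p t * (((p/(1-p))^j * (p⁻¹)^j) * (((1-p)/p) * (p/(1-p)))) by ring, key]
  have h1 : ((1-p)/p) * (p/(1-p)) = 1 := by field_simp
  rw [h1, mul_one]
  ring

lemma Lam_succ (hp0 : 0 < p) (hq : 0 < 1 - p) (ht : 1 ≤ t) (k : ℕ) :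
    Lam p t (k+1)
      = -(nu p t) * (ss p ^ k * ∑ j ∈ Finset.range t, ((k.choose j : ℝ) * (-p⁻¹) ^ j)) := by
  have hpne : p ≠ 0 := ne_of_gt hp0
  have hqne : (1:ℝ)-p ≠ 0 := ne_of_gt hq
  have hsr : ss p * rr p = 1 := by unfold ss rr; field_simp
  -- difference sum
  have hsplit : ∑ j ∈ Finset.range t, bb p t j * ((k+1).choose j : ℝ) * rr p ^ j
      = (∑ j ∈ Finset.range t, bb p t j * (k.choose j : ℝ) * rr p ^ j)
        + ∑ j ∈ Finset.range t, bb p t j * (((k+1).choose j : ℝ) - (k.choose j : ℝ)) * rr p ^ j := by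
    rw [← Finset.sum_add_distrib]
    apply Finset.sum_congr rfl
    intro j _
    ring
  have hS2 : ∑ j ∈ Finset.range t, bb p t j * (((k+1).choose j : ℝ) - (k.choose j : ℝ)) * rr p ^ j
      = ∑ j ∈ Finset.range t, bb p t (j+1) * (k.choose j : ℝ) * rr p ^ (j+1) := by
    obtain ⟨t', rfl⟩ : ∃ t', t = t' + 1 := ⟨t - 1, by omega⟩
    rw [Finset.sum_range_succ' (fun j => bb p (t'+1) j * (((k+1).choose j : ℝ) - (k.choose j : ℝ)) * rr p ^ j) t']
    rw [Finset.sum_range_succ (fun j => bb p (t'+1) (j+1) * (k.choose j : ℝ) * rr p ^ (j+1)) t']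
    rw [bb_of_ge (le_refl (t'+1))]
    simp only [Nat.choose_zero_right, Nat.cast_one, sub_self, mul_zero, zero_mul, add_zero, pow_zero]
    apply Finset.sum_congr rfl
    intro j _
    have : ((k+1).choose (j+1) : ℝ) - (k.choose (j+1) : ℝ) = (k.choose j : ℝ) := by
      rw [Nat.choose_succ_succ]
      push_cast
      ring
    rw [this]
  have hS3 : ∑ j ∈ Finset.range t, bb p t (j+1) * (k.choose j : ℝ) * rr p ^ (j+1)
      = -(∑ j ∈ Finset.range t, bb p t j * (k.choose j : ℝ) * rr p ^ j)
        - nu p t * rr p * ∑ j ∈ Finset.range t, ((k.choose j : ℝ) * (-p⁻¹) ^ j) := by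
    rw [← Finset.sum_neg_distrib, Finset.mul_sum, ← Finset.sum_sub_distrib]
    apply Finset.sum_congr rfl
    intro j hj
    rw [bb_succ hp0 hq (Finset.mem_range.mp hj)]
    have h2 : (p/(1-p)) * rr p = -1 := by unfold rr; field_simp
    have h3 : ((1-p)⁻¹)^j * rr p ^ j = (-p⁻¹)^j := by
      rw [← mul_pow]; congr 1; unfold rr; field_simp
    calc ((p/(1-p)) * bb p t j - nu p t * ((1-p)⁻¹)^j) * (k.choose j : ℝ) * rr p ^ (j+1)
        = ((p/(1-p)) * rr p) * bb p t j * (k.choose j : ℝ) * rr p ^ j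
          - nu p t * rr p * ((k.choose j : ℝ) * (((1-p)⁻¹)^j * rr p ^ j)) := by
          rw [pow_succ]; ring
      _ = -(bb p t j * (k.choose j : ℝ) * rr p ^ j)
          - nu p t * rr p * ((k.choose j : ℝ) * (-p⁻¹) ^ j) := by rw [h2, h3]; ring
  unfold Lam
  rw [hsplit, hS2, hS3, pow_succ]
  have : ss p ^ k * ss p * (nu p t * rr p * ∑ j ∈ Finset.range t, ((k.choose j : ℝ) * (-p⁻¹) ^ j))
      = nu p t * (ss p ^ k * ∑ j ∈ Finset.range t, ((k.choose j : ℝ) * (-p⁻¹) ^ j)) := by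
    rw [show ss p ^ k * ss p * (nu p t * rr p * ∑ j ∈ Finset.range t, ((k.choose j : ℝ) * (-p⁻¹) ^ j))
        = (ss p * rr p) * (nu p t * (ss p ^ k * ∑ j ∈ Finset.range t, ((k.choose j : ℝ) * (-p⁻¹) ^ j))) by ring,
      hsr, one_mul]
  rw [mul_add, mul_sub]
  rw [this]
  ring

lemma DD_lt {k : ℕ} (h : k < t) : DD p t k = 0 := by
  unfold DD
  rw [show k + 1 - t = 0 by omega]
  simp

lemma DD_self : DD p t t = 1 := by
  unfold DD
  rw [show t + 1 - t = 1 by omega]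
  simp

lemma DD_rec {m : ℕ} (h : t ≤ m) : DD p t (m+1)
    = (1-p) * DD p t m + (m.choose (m+1-t) : ℝ) * (-p)^(m+1-t) := by
  have hr1 : 1 ≤ m + 1 - t := by omega
  obtain ⟨r, hr⟩ : ∃ r, m + 1 - t = r + 1 := ⟨m - t, by omega⟩
  have hDm : DD p t m = ∑ l ∈ Finset.range (r+1), (m.choose l : ℝ) * (-p) ^ l := by
    unfold DD; rw [show m + 1 - t = r + 1 by omega]
  have hD1 : DD p t (m+1) = ∑ l ∈ Finset.range ((r+1)+1), ((m+1).choose l : ℝ) * (-p) ^ l := by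
    unfold DD; rw [show m + 1 + 1 - t = (r+1) + 1 by omega]
  rw [hD1]
  rw [Finset.sum_range_succ' (fun l => ((m+1).choose l : ℝ) * (-p) ^ l) (r+1)]
  have hterm : ∀ l, (((m+1).choose (l+1) : ℝ)) * (-p)^(l+1)
      = (m.choose l : ℝ) * (-p)^(l+1) + (m.choose (l+1) : ℝ) * (-p)^(l+1) := by
    intro l
    rw [Nat.choose_succ_succ]
    push_cast
    ring
  rw [Finset.sum_congr rfl (fun l _ => hterm l)]
  rw [Finset.sum_add_distrib]
  have h1 : ∑ l ∈ Finset.range (r+1), (m.choose l : ℝ) * (-p)^(l+1)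
      = (-p) * DD p t m := by
    rw [hDm, Finset.mul_sum]
    apply Finset.sum_congr rfl
    intro l _
    rw [pow_succ]
    ring
  have h2 : (∑ l ∈ Finset.range (r+1), (m.choose (l+1) : ℝ) * (-p)^(l+1))
        + (((m+1).choose 0 : ℝ)) * (-p) ^ 0
      = DD p t m + (m.choose (r+1) : ℝ) * (-p)^(r+1) := by
    have := Finset.sum_range_succ' (fun l => ((m).choose l : ℝ) * (-p) ^ l) (r+1)
    simp only [Nat.choose_zero_right, Nat.cast_one, pow_zero, mul_one] at this ⊢
    rw [← this, Finset.sum_range_succ, hDm]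
  rw [add_assoc, h1, h2, hr]
  ring

lemma DD_nonneg (hp0 : 0 < p) (ht : 1 ≤ t) (hpt : p * (t+1) ≤ 1) (m : ℕ) :
    0 ≤ DD p t m ∧ (t ≤ m → Even (m - t) → ((m-1).choose (m-t) : ℝ) * p^(m-t) ≤ DD p t m) := by
  have hq : 0 ≤ 1 - p := by
    have h : (1:ℝ) ≤ (t:ℝ) := by exact_mod_cast ht
    nlinarith
  have hq' : (t:ℝ) * p ≤ 1 - p := by
    have h : (1:ℝ) ≤ (t:ℝ) := by exact_mod_cast ht
    push_cast at hpt
    nlinarith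
  induction m with
  | zero =>
    constructor
    · rw [DD_lt (by omega)]
    · intro h; omega
  | succ m ih =>
    rcases lt_trichotomy (m+1) t with hlt | heq | hgt
    · constructor
      · rw [DD_lt hlt]
      · intro h; omega
    · subst heq
      constructor
      · rw [DD_self]; norm_num
      · intro _ _
        rw [DD_self, show m + 1 - (m+1) = 0 by omega]
        simp
    · have htm : t ≤ m := by omega
      have hrec := DD_rec (p := p) htm
      set r := m + 1 - t with hrdef
      have hr1 : 1 ≤ r := by omega
      rcases Nat.even_or_odd r with hre | hro
      · -- r even
        have hpow : (-p)^r = p^r := (Even.neg_pow hre p)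
        constructor
        · rw [hrec, hpow]
          have := ih.1
          positivity
        · intro _ _
          rw [hrec, hpow, show m + 1 - 1 = m by omega]
          have h1 : 0 ≤ (1-p) * DD p t m := mul_nonneg hq ih.1
          linarith
      · -- r odd
        have hpow : (-p)^r = -(p^r) := (Odd.neg_pow hro p)
        have heven : Even (m - t) := by
          have : m - t = r - 1 := by omega
          rw [this]
          exact Nat.Odd.sub_odd hro odd_one
        have hIH := ih.2 htm heven
        have hmt : m - t = r - 1 := by omega
        constructor
        · rw [hrec, hpow]
          -- need (1-p) * DD m ≥ C(m,r) p^r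
          have hm1 : 1 ≤ m := by omega
          -- Nat identity: m * C(m-1, r-1) = C(m,r) * r
          have hnat : m * ((m-1).choose (r-1)) = m.choose r * r := by
            have := Nat.add_one_mul_choose_eq (m-1) (r-1)
            rw [show m - 1 + 1 = m by omega, show r - 1 + 1 = r by omega] at this
            exact this
          have htr : m ≤ t * r := by
            have ha : r = (m - t) + 1 := by omega
            have h1 : (m - t) ≤ t * (m - t) := Nat.le_mul_of_pos_left _ (by omega)
            calc m = t + (m - t) := by omega
              _ ≤ t + t * (m - t) := by omega
              _ = t * ((m - t) + 1) := by ring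
              _ = t * r := by rw [← ha]
          have hnatR : (m:ℝ) * ((m-1).choose (r-1) : ℝ) = (m.choose r : ℝ) * r := by
            exact_mod_cast hnat
          have htrR : (m:ℝ) ≤ (t:ℝ) * r := by exact_mod_cast htr
          have hrR : (0:ℝ) < r := by exact_mod_cast hr1
          have hCnn : (0:ℝ) ≤ ((m-1).choose (r-1) : ℝ) := Nat.cast_nonneg _
          -- (1-p) * C(m-1,r-1) ≥ p * C(m,r)
          have hkey : p * (m.choose r : ℝ) ≤ (1-p) * ((m-1).choose (r-1) : ℝ) := by
            rw [← mul_le_mul_iff_of_pos_right hrR]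
            calc p * (m.choose r : ℝ) * r = p * ((m:ℝ) * ((m-1).choose (r-1) : ℝ)) := by
                  rw [mul_assoc, ← hnatR]
              _ ≤ p * ((t:ℝ) * r * ((m-1).choose (r-1) : ℝ)) := by
                  apply mul_le_mul_of_nonneg_left _ (le_of_lt hp0)
                  exact mul_le_mul_of_nonneg_right htrR hCnn
              _ = ((t:ℝ) * p) * ((m-1).choose (r-1) : ℝ) * r := by ring
              _ ≤ (1-p) * ((m-1).choose (r-1) : ℝ) * r := by
                  apply mul_le_mul_of_nonneg_right _ (le_of_lt hrR)
                  exact mul_le_mul_of_nonneg_right hq' hCnn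
          have hppow : (0:ℝ) ≤ p^(r-1) := by positivity
          rw [hmt] at hIH
          have hsp : p ^ r = p * p ^ (r - 1) := by
            conv_lhs => rw [show r = (r-1)+1 by omega]
            rw [pow_succ']
          have hchain : (m.choose r : ℝ) * p^r ≤ (1-p) * DD p t m := by
            calc (m.choose r : ℝ) * p^r = (p * (m.choose r : ℝ)) * p^(r-1) := by
                  rw [hsp]; ring
              _ ≤ ((1-p) * ((m-1).choose (r-1) : ℝ)) * p^(r-1) :=
                  mul_le_mul_of_nonneg_right hkey hppow
              _ = (1-p) * (((m-1).choose (r-1) : ℝ) * p^(r-1)) := by ring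
              _ ≤ (1-p) * DD p t m := mul_le_mul_of_nonneg_left hIH hq
          linarith
        · intro _ habs
          exact absurd habs (Nat.not_even_iff_odd.mpr hro)


lemma Lam_zero (hp0 : 0 < p) (hq : 0 < 1 - p) (ht : 1 ≤ t) : Lam p t 0 = 1 := by
  unfold Lam
  rw [pow_zero, one_mul]
  rw [Finset.sum_eq_single_of_mem 0 (Finset.mem_range.mpr (by omega))]
  · rw [bb_zero hp0 hq ht]; simp
  · intro j _ hj0
    rw [Nat.choose_eq_zero_of_lt (by omega)]
    simp

lemma ss_eq (hp0 : 0 < p) (hq : 0 < 1 - p) : ss p = (-p) * ((1-p)⁻¹) := by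
  unfold ss; rw [div_eq_mul_inv]; ring

lemma W_eq (hp0 : 0 < p) (hq : 0 < 1 - p) (k : ℕ) :
    ss p ^ k * ∑ j ∈ Finset.range t, ((k.choose j : ℝ) * (-p⁻¹) ^ j)
      = 1 - ((1-p)⁻¹)^k * DD p t k := by
  have hpne : p ≠ 0 := ne_of_gt hp0
  have hqne : (1:ℝ) - p ≠ 0 := ne_of_gt hq
  have hbin : ∑ j ∈ Finset.range (k+1), ((k.choose j : ℝ) * (-p⁻¹) ^ j)
      = (-p⁻¹ + 1)^k := by
    rw [add_pow]
    apply Finset.sum_congr rfl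
    intro j _
    rw [one_pow]
    ring
  have hss1 : ss p * (-p⁻¹ + 1) = 1 := by
    unfold ss; field_simp; ring
  have hfull : ss p ^ k * ∑ j ∈ Finset.range (k+1), ((k.choose j : ℝ) * (-p⁻¹) ^ j) = 1 := by
    rw [hbin, ← mul_pow, hss1, one_pow]
  rcases le_or_gt (k+1) t with h | h
  · rw [DD_lt (by omega), mul_zero, sub_zero]
    rw [← hfull]
    congr 1
    rw [Finset.sum_subset (Finset.range_subset_range.mpr h)]
    intro j _ hj
    rw [Nat.choose_eq_zero_of_lt (by simp at hj ⊢; omega)]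
    simp
  · have hsplit := Finset.sum_Ico_consecutive
      (fun j => ((k.choose j : ℝ) * (-p⁻¹) ^ j)) (Nat.zero_le t) (by omega : t ≤ k+1)
    rw [← Finset.range_eq_Ico, ← Finset.range_eq_Ico] at hsplit
    have hIco : ss p ^ k * ∑ j ∈ Finset.Ico t (k+1), ((k.choose j : ℝ) * (-p⁻¹) ^ j)
        = ((1-p)⁻¹)^k * DD p t k := by
    -- reindex
      unfold DD
      rw [Finset.mul_sum, Finset.mul_sum]
      refine Finset.sum_nbij' (fun j => k - j) (fun l => k - l) ?_ ?_ ?_ ?_ ?_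
      · intro j hj
        simp only [Finset.mem_Ico] at hj
        simp only [Finset.mem_range]
        omega
      · intro l hl
        simp only [Finset.mem_range] at hl
        simp only [Finset.mem_Ico]
        omega
      · intro j hj
        simp only [Finset.mem_Ico] at hj
        show k - (k - j) = j
        omega
      · intro l hl
        simp only [Finset.mem_range] at hl
        show k - (k - l) = l
        omega
      · intro j hj
        simp only [Finset.mem_Ico] at hj
        have hjk : j ≤ k := by omega
        rw [Nat.choose_symm hjk]
        have h1 : ss p ^ k = (-p)^k * ((1-p)⁻¹)^k := by rw [ss_eq hp0 hq, mul_pow]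
        have h2 : ((-p⁻¹ : ℝ)) ^ j = (((-p)⁻¹ : ℝ)) ^ j := by rw [inv_neg]
        have h3 : ((-p : ℝ))^k * (((-p)⁻¹ : ℝ))^j = (-p)^(k-j) := by
          rw [inv_pow, pow_sub₀ (-p) (neg_ne_zero.mpr hpne) hjk]
        rw [h1, h2]
        calc (-p)^k * ((1-p)⁻¹)^k * ((k.choose j : ℝ) * ((-p)⁻¹) ^ j)
            = ((1-p)⁻¹)^k * ((k.choose j : ℝ) * ((-p)^k * ((-p)⁻¹)^j)) := by ring
          _ = ((1-p)⁻¹)^k * ((k.choose j : ℝ) * (-p)^(k-j)) := by rw [h3]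
    calc ss p ^ k * ∑ j ∈ Finset.range t, ((k.choose j : ℝ) * (-p⁻¹) ^ j)
        = ss p ^ k * ∑ j ∈ Finset.range (k+1), ((k.choose j : ℝ) * (-p⁻¹) ^ j)
          - ss p ^ k * ∑ j ∈ Finset.Ico t (k+1), ((k.choose j : ℝ) * (-p⁻¹) ^ j) := by
          rw [← hsplit]; ring
      _ = 1 - ((1-p)⁻¹)^k * DD p t k := by rw [hfull, hIco]

lemma Lam_ge (hp0 : 0 < p) (ht : 1 ≤ t) (hpt : p * (t+1) ≤ 1) {k : ℕ} (hk : 1 ≤ k) :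
    -(nu p t) ≤ Lam p t k := by
  have hq : 0 < 1 - p := hq0 hp0 ht hpt
  obtain ⟨k', rfl⟩ : ∃ k', k = k' + 1 := ⟨k - 1, by omega⟩
  rw [Lam_succ hp0 hq ht k', W_eq hp0 hq k']
  have hD := (DD_nonneg hp0 ht hpt k').1
  have hnu := nu_pos hp0 hpt ht
  have hE : 0 ≤ ((1-p)⁻¹)^(k') * DD p t k' := mul_nonneg (by positivity) hD
  have hprod : 0 ≤ nu p t * (((1-p)⁻¹)^(k') * DD p t k') :=
    mul_nonneg (le_of_lt hnu) hE
  nlinarith [hprod]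

end scalar

section comb
variable {n : ℕ} {p : ℝ}

noncomputable def mu (n : ℕ) (p : ℝ) (x : Finset (Fin n)) : ℝ :=
  p ^ x.card * (1-p) ^ (n - x.card)
noncomputable def chi (p : ℝ) (x : Finset (Fin n)) (i : Fin n) : ℝ :=
  (if i ∈ x then 1 else 0) - p
noncomputable def base (p : ℝ) (x y : Finset (Fin n)) (i : Fin n) : ℝ :=
  chi p x i * chi p y i / (p * (1 - p))
noncomputable def cS (p : ℝ) (G : Finset (Finset (Fin n))) (S : Finset (Fin n)) : ℝ :=
  ∑ x ∈ G, mu n p x * ∏ i ∈ S, chi p x i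

lemma prod_expand (c : ℝ) (h : Fin n → ℝ) (U : Finset (Fin n)) :
    ∏ i ∈ U, (1 + c * h i) = ∑ S ∈ U.powerset, c ^ S.card * ∏ i ∈ S, h i := by
  rw [Finset.prod_congr rfl (fun i _ => add_comm 1 (c * h i))]
  rw [Finset.prod_add]
  apply Finset.sum_congr rfl
  intro S hS
  rw [Finset.prod_const_one, mul_one, Finset.prod_mul_distrib, Finset.prod_const]

lemma mu_pos (hp0 : 0 < p) (hq : 0 < 1 - p) (x : Finset (Fin n)) : 0 < mu n p x := by
  unfold mu; positivity

lemma base_in_in (hp0 : 0 < p) (hq : 0 < 1 - p) {x y : Finset (Fin n)} {i : Fin n}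
    (hx : i ∈ x) (hy : i ∈ y) : base p x y i = (1-p)/p := by
  unfold base chi
  rw [if_pos hx, if_pos hy]
  have hpne : p ≠ 0 := ne_of_gt hp0
  have hqne : (1:ℝ) - p ≠ 0 := ne_of_gt hq
  field_simp

lemma m0_zero (hp0 : 0 < p) (hq : 0 < 1 - p) {x y : Finset (Fin n)} {i : Fin n}
    (hx : i ∈ x) (hy : i ∈ y) : 1 + ss p * base p x y i = 0 := by
  rw [base_in_in hp0 hq hx hy]
  unfold ss
  have hpne : p ≠ 0 := ne_of_gt hp0
  have hqne : (1:ℝ) - p ≠ 0 := ne_of_gt hq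
  field_simp
  ring

/-- The quadratic form of the `j`-th operator vanishes on a `t`-intersecting family. -/
lemma Zj_zero (hp0 : 0 < p) (hq : 0 < 1 - p) {t : ℕ} (G : Finset (Finset (Fin n)))
    (hG : ∀ x ∈ G, ∀ y ∈ G, t ≤ (x ∩ y).card) {j : ℕ} (hj : j < t) :
    ∑ x ∈ G, ∑ y ∈ G, (mu n p x * mu n p y) *
      (∑ W ∈ Finset.powersetCard j (Finset.univ : Finset (Fin n)),
        (∏ i ∈ W, base p x y i) * ∏ i ∈ Finset.univ \ W, (1 + ss p * base p x y i)) = 0 := by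
  apply Finset.sum_eq_zero
  intro x hx
  apply Finset.sum_eq_zero
  intro y hy
  have hxy := hG x hx y hy
  have hWzero : ∀ W ∈ Finset.powersetCard j (Finset.univ : Finset (Fin n)),
      (∏ i ∈ W, base p x y i) * ∏ i ∈ Finset.univ \ W, (1 + ss p * base p x y i) = 0 := by
    intro W hW
    have hcard : W.card = j := Finset.mem_powersetCard_univ.mp hW
    have hnsub : ¬ (x ∩ y ⊆ W) := by
      intro hsub
      have := Finset.card_le_card hsub
      omega
    obtain ⟨i0, hi0mem, hi0not⟩ := Finset.not_subset.mp hnsub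
    have hm0 : 1 + ss p * base p x y i0 = 0 :=
      m0_zero hp0 hq (Finset.mem_inter.mp hi0mem).1 (Finset.mem_inter.mp hi0mem).2
    rw [Finset.prod_eq_zero (Finset.mem_sdiff.mpr ⟨Finset.mem_univ i0, hi0not⟩) hm0, mul_zero]
  rw [Finset.sum_eq_zero hWzero, mul_zero]

lemma pow_helper (hp0 : 0 < p) (hq : 0 < 1 - p) {j a : ℕ} (hja : j ≤ a) :
    ss p ^ (a - j) = ss p ^ a * rr p ^ j := by
  have hsr : ss p * rr p = 1 := by
    unfold ss rr
    have hpne : p ≠ 0 := ne_of_gt hp0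
    have hqne : (1:ℝ) - p ≠ 0 := ne_of_gt hq
    field_simp
  have : ss p ^ a = ss p ^ (a - j) * ss p ^ j := by
    rw [← pow_add, Nat.sub_add_cancel hja]
  rw [this, mul_assoc, ← mul_pow, hsr, one_pow, mul_one]

/-- Pointwise expansion of the `j`-th operator kernel into the `chi` basis. -/
lemma kernel_expand (hp0 : 0 < p) (hq : 0 < 1 - p) (j : ℕ) (x y : Finset (Fin n)) :
    ∑ W ∈ Finset.powersetCard j (Finset.univ : Finset (Fin n)),
      (∏ i ∈ W, base p x y i) * ∏ i ∈ Finset.univ \ W, (1 + ss p * base p x y i)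
    = ∑ S : Finset (Fin n),
        ((S.card.choose j : ℝ) * ss p ^ S.card * rr p ^ j) * ∏ i ∈ S, base p x y i := by
  have step1 : ∀ W ∈ Finset.powersetCard j (Finset.univ : Finset (Fin n)),
      (∏ i ∈ W, base p x y i) * ∏ i ∈ Finset.univ \ W, (1 + ss p * base p x y i)
      = ∑ S ∈ Finset.univ.powerset.filter (fun S => W ⊆ S),
          ss p ^ ((S \ W).card) * ∏ i ∈ S, base p x y i := by
    intro W hW
    rw [prod_expand (ss p) (base p x y) (Finset.univ \ W), Finset.mul_sum]
    refine Finset.sum_nbij' (fun S' => W ∪ S') (fun S => S \ W) ?_ ?_ ?_ ?_ ?_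
    · intro S' hS'
      simp only [Finset.mem_powerset, Finset.mem_filter] at hS' ⊢
      exact ⟨Finset.subset_univ _, Finset.subset_union_left⟩
    · intro S hS
      simp only [Finset.mem_powerset, Finset.mem_filter] at hS ⊢
      exact Finset.sdiff_subset_sdiff hS.1 (le_refl W)
    · intro S' hS'
      simp only [Finset.mem_powerset] at hS'
      apply Finset.union_sdiff_cancel_left
      rw [Finset.disjoint_left]
      intro i hiW hiS'
      exact (Finset.mem_sdiff.mp (hS' hiS')).2 hiW
    · intro S hS
      simp only [Finset.mem_powerset, Finset.mem_filter] at hS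
      exact Finset.union_sdiff_of_subset hS.2
    · intro S' hS'
      simp only [Finset.mem_powerset] at hS'
      have hdisj : Disjoint W S' := by
        rw [Finset.disjoint_left]
        intro i hiW hiS'
        exact (Finset.mem_sdiff.mp (hS' hiS')).2 hiW
      rw [Finset.union_sdiff_cancel_left hdisj, Finset.prod_union hdisj]
      ring
  rw [Finset.sum_congr rfl step1]
  rw [Finset.sum_comm' (s := Finset.powersetCard j (Finset.univ : Finset (Fin n)))
      (t := fun W => Finset.univ.powerset.filter (fun S => W ⊆ S))
      (t' := Finset.univ.powerset)
      (s' := fun S => (Finset.powersetCard j (Finset.univ : Finset (Fin n))).filter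
          (fun W => W ⊆ S))
      (by
        intro W S
        constructor
        · rintro ⟨h1, h2⟩
          rw [Finset.mem_filter] at h2
          exact ⟨Finset.mem_filter.mpr ⟨h1, h2.2⟩, h2.1⟩
        · rintro ⟨h1, h2⟩
          rw [Finset.mem_filter] at h1
          exact ⟨h1.1, Finset.mem_filter.mpr ⟨h2, h1.2⟩⟩)]
  rw [Finset.powerset_univ]
  apply Finset.sum_congr rfl
  intro S _
  have hfiltr : (Finset.powersetCard j (Finset.univ : Finset (Fin n))).filter (fun W => W ⊆ S)
      = Finset.powersetCard j S := by
    ext W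
    constructor
    · intro h
      obtain ⟨h1, h2⟩ := Finset.mem_filter.mp h
      exact Finset.mem_powersetCard.mpr ⟨h2, Finset.mem_powersetCard_univ.mp h1⟩
    · intro h
      obtain ⟨h1, h2⟩ := Finset.mem_powersetCard.mp h
      exact Finset.mem_filter.mpr ⟨Finset.mem_powersetCard_univ.mpr h2, h1⟩
  rw [hfiltr]
  have hval : ∀ W ∈ Finset.powersetCard j S,
      ss p ^ ((S \ W).card) * ∏ i ∈ S, base p x y i
      = (ss p ^ S.card * rr p ^ j) * ∏ i ∈ S, base p x y i := by
    intro W hW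
    obtain ⟨hWS, hWcard⟩ := Finset.mem_powersetCard.mp hW
    have hjcard : j ≤ S.card := hWcard ▸ Finset.card_le_card hWS
    rw [Finset.card_sdiff_of_subset hWS, hWcard, pow_helper hp0 hq hjcard]
  rw [Finset.sum_congr rfl hval, Finset.sum_const, Finset.card_powersetCard, nsmul_eq_mul]
  ring

lemma prod_base_split (hp0 : 0 < p) (hq : 0 < 1 - p) (x y S : Finset (Fin n)) :
    ∏ i ∈ S, base p x y i
      = ((p*(1-p))⁻¹)^S.card * ((∏ i ∈ S, chi p x i) * (∏ i ∈ S, chi p y i)) := by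
  unfold base
  rw [show (fun i => chi p x i * chi p y i / (p * (1-p)))
      = (fun i => (chi p x i * chi p y i) * (p*(1-p))⁻¹) from by funext i; rw [div_eq_mul_inv]]
  rw [Finset.prod_mul_distrib, Finset.prod_const, Finset.prod_mul_distrib]
  ring

/-- Fourier form of the quadratic form of the `j`-th operator. -/
lemma Zj_fourier (hp0 : 0 < p) (hq : 0 < 1 - p) (G : Finset (Finset (Fin n))) (j : ℕ) :
    ∑ x ∈ G, ∑ y ∈ G, (mu n p x * mu n p y) *
      (∑ W ∈ Finset.powersetCard j (Finset.univ : Finset (Fin n)),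
        (∏ i ∈ W, base p x y i) * ∏ i ∈ Finset.univ \ W, (1 + ss p * base p x y i))
    = ∑ S : Finset (Fin n),
        ((p*(1-p))⁻¹)^S.card * (cS p G S)^2 * ((S.card.choose j : ℝ) * ss p ^ S.card * rr p ^ j)
    := by
  have hpoint : ∀ x ∈ G, ∀ y ∈ G, (mu n p x * mu n p y) *
      (∑ W ∈ Finset.powersetCard j (Finset.univ : Finset (Fin n)),
        (∏ i ∈ W, base p x y i) * ∏ i ∈ Finset.univ \ W, (1 + ss p * base p x y i))
      = ∑ S : Finset (Fin n),
          ((S.card.choose j : ℝ) * ss p ^ S.card * rr p ^ j) * (((p*(1-p))⁻¹)^S.card *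
            ((mu n p x * ∏ i ∈ S, chi p x i) * (mu n p y * ∏ i ∈ S, chi p y i))) := by
    intro x _ y _
    rw [kernel_expand hp0 hq j x y, Finset.mul_sum]
    apply Finset.sum_congr rfl
    intro S _
    rw [prod_base_split hp0 hq x y S]
    ring
  rw [Finset.sum_congr rfl (fun x hx => Finset.sum_congr rfl (fun y hy => hpoint x hx y hy))]
  rw [Finset.sum_congr rfl (fun x _ => Finset.sum_comm)]
  rw [Finset.sum_comm]
  apply Finset.sum_congr rfl
  intro S _
  set K := ((S.card.choose j : ℝ) * ss p ^ S.card * rr p ^ j) with hK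
  set E := (((p*(1-p))⁻¹)^S.card : ℝ) with hE
  have hsum1 : ∀ x ∈ G, ∑ y ∈ G, K * (E *
        ((mu n p x * ∏ i ∈ S, chi p x i) * (mu n p y * ∏ i ∈ S, chi p y i)))
      = (K * E * (mu n p x * ∏ i ∈ S, chi p x i)) * cS p G S := by
    intro x _
    rw [show cS p G S = ∑ y ∈ G, mu n p y * ∏ i ∈ S, chi p y i from rfl, Finset.mul_sum]
    apply Finset.sum_congr rfl
    intro y _
    ring
  rw [Finset.sum_congr rfl hsum1]
  have hsum2 : ∑ x ∈ G, (K * E * (mu n p x * ∏ i ∈ S, chi p x i)) * cS p G S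
      = (K * E * cS p G S) * cS p G S := by
    rw [← Finset.sum_mul, ← Finset.mul_sum,
      show (∑ x ∈ G, mu n p x * ∏ i ∈ S, chi p x i) = cS p G S from rfl]
  rw [hsum2]
  ring


lemma delta_kernel (hp0 : 0 < p) (hq : 0 < 1 - p) (x y : Finset (Fin n)) :
    ∏ i ∈ (Finset.univ : Finset (Fin n)), (1 + base p x y i)
      = if x = y then (mu n p x)⁻¹ else 0 := by
  have hpne : p ≠ 0 := ne_of_gt hp0
  have hqne : (1:ℝ) - p ≠ 0 := ne_of_gt hq
  by_cases hxy : x = y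
  · subst hxy
    rw [if_pos rfl]
    have hfac : ∀ i ∈ (Finset.univ : Finset (Fin n)),
        (1 + base p x x i) = (if i ∈ x then p⁻¹ else (1-p)⁻¹) := by
      intro i _
      by_cases hi : i ∈ x
      · rw [if_pos hi, base_in_in hp0 hq hi hi]
        field_simp
        all_goals (first | ring1 | (left; ring1) | tauto | simp)
      · rw [if_neg hi]
        unfold base chi
        rw [if_neg hi]
        field_simp
        all_goals (first | ring1 | (left; ring1) | tauto | simp)
    rw [Finset.prod_congr rfl hfac]
    have hsplit := Finset.prod_filter_mul_prod_filter_not (Finset.univ : Finset (Fin n))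
      (fun i => i ∈ x) (fun i => if i ∈ x then p⁻¹ else (1-p)⁻¹)
    rw [← hsplit]
    have h1 : Finset.filter (fun i => i ∈ x) (Finset.univ : Finset (Fin n)) = x := by
      ext i; simp
    have h2 : ∏ i ∈ Finset.filter (fun i => i ∈ x) (Finset.univ : Finset (Fin n)),
        (if i ∈ x then (p⁻¹:ℝ) else (1-p)⁻¹) = p⁻¹ ^ x.card := by
      rw [h1]
      rw [Finset.prod_congr rfl (fun i hi => if_pos hi)]
      exact Finset.prod_const _
    have h3 : ∏ i ∈ Finset.filter (fun i => ¬ i ∈ x) (Finset.univ : Finset (Fin n)),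
        (if i ∈ x then (p⁻¹:ℝ) else (1-p)⁻¹) = ((1-p)⁻¹) ^ (n - x.card) := by
      rw [Finset.prod_congr rfl (fun i hi => if_neg (Finset.mem_filter.mp hi).2)]
      rw [Finset.prod_const]
      congr 1
      rw [Finset.filter_not, Finset.filter_mem_eq_inter, Finset.univ_inter]
      rw [Finset.card_sdiff_of_subset (Finset.subset_univ x), Finset.card_univ, Fintype.card_fin]
    rw [h2, h3]
    unfold mu
    rw [mul_inv, ← inv_pow, ← inv_pow]
  · rw [if_neg hxy]
    have hex : ∃ i, (i ∈ x ∧ i ∉ y) ∨ (i ∈ y ∧ i ∉ x) := by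
      by_contra hc
      push_neg at hc
      apply hxy
      ext i
      have := hc i
      tauto
    obtain ⟨i0, hcase⟩ := hex
    apply Finset.prod_eq_zero (Finset.mem_univ i0)
    have hbase : base p x y i0 = -1 := by
      unfold base chi
      rcases hcase with ⟨h1, h2⟩ | ⟨h1, h2⟩
      · rw [if_pos h1, if_neg h2]
        field_simp
        all_goals (first | ring1 | (left; ring1) | tauto | simp)
      · rw [if_neg h2, if_pos h1]
        field_simp
        all_goals (first | ring1 | (left; ring1) | tauto | simp)
    rw [hbase]
    ring

lemma parseval (hp0 : 0 < p) (hq : 0 < 1 - p) (G : Finset (Finset (Fin n))) :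
    ∑ S : Finset (Fin n), ((p*(1-p))⁻¹)^S.card * (cS p G S)^2 = ∑ x ∈ G, mu n p x := by
  have hexp : ∀ S : Finset (Fin n), ((p*(1-p))⁻¹)^S.card * (cS p G S)^2
      = ∑ x ∈ G, ∑ y ∈ G, (mu n p x * mu n p y) *
          (((p*(1-p))⁻¹)^S.card * ((∏ i ∈ S, chi p x i) * (∏ i ∈ S, chi p y i))) := by
    intro S
    rw [pow_two]
    unfold cS
    rw [Finset.sum_mul_sum, Finset.mul_sum]
    apply Finset.sum_congr rfl
    intro x _
    rw [Finset.mul_sum]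
    apply Finset.sum_congr rfl
    intro y _
    ring
  rw [Finset.sum_congr rfl (fun S _ => hexp S)]
  rw [Finset.sum_comm]
  rw [Finset.sum_congr rfl (fun x _ => Finset.sum_comm)]
  have hpt : ∀ x ∈ G, ∀ y ∈ G, ∑ S : Finset (Fin n), (mu n p x * mu n p y) *
        (((p*(1-p))⁻¹)^S.card * ((∏ i ∈ S, chi p x i) * (∏ i ∈ S, chi p y i)))
      = (mu n p x * mu n p y) * (if x = y then (mu n p x)⁻¹ else 0) := by
    intro x _ y _
    rw [← Finset.mul_sum]
    congr 1
    have h1 : ∀ S : Finset (Fin n),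
        ((p*(1-p))⁻¹)^S.card * ((∏ i ∈ S, chi p x i) * (∏ i ∈ S, chi p y i))
        = (1:ℝ)^S.card * ∏ i ∈ S, base p x y i := by
      intro S
      rw [one_pow, one_mul, prod_base_split hp0 hq]
    rw [Finset.sum_congr rfl (fun S _ => h1 S)]
    have h2 : ∑ S : Finset (Fin n), (1:ℝ)^S.card * ∏ i ∈ S, base p x y i
        = ∑ S ∈ (Finset.univ : Finset (Fin n)).powerset, (1:ℝ)^S.card * ∏ i ∈ S, base p x y i := by
      rw [Finset.powerset_univ]
    rw [h2, ← prod_expand 1 (base p x y) Finset.univ]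
    rw [Finset.prod_congr rfl (fun i _ => by rw [one_mul] :
      ∀ i ∈ (Finset.univ : Finset (Fin n)), 1 + 1 * base p x y i = 1 + base p x y i)]
    exact delta_kernel hp0 hq x y
  rw [Finset.sum_congr rfl (fun x hx => Finset.sum_congr rfl (fun y hy => hpt x hx y hy))]
  apply Finset.sum_congr rfl
  intro x hx
  rw [Finset.sum_eq_single x]
  · rw [if_pos rfl]
    have := ne_of_gt (mu_pos hp0 hq (x := x))
    field_simp
  · intro y _ hyx
    rw [if_neg (Ne.symm hyx), mul_zero]
  · intro hxG
    exact absurd hx hxG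

theorem measure_bound {n : ℕ} (t : ℕ) (ht : 1 ≤ t) {p : ℝ} (hp0 : 0 < p)
    (hpt : p * (t+1) ≤ 1) (G : Finset (Finset (Fin n)))
    (hG : ∀ x ∈ G, ∀ y ∈ G, t ≤ (x ∩ y).card) :
    ∑ x ∈ G, mu n p x ≤ p ^ t := by
  have hq : 0 < 1 - p := hq0 hp0 ht hpt
  have hnu := nu_pos hp0 hpt ht
  have hplt := hpow_lt hp0 hpt ht
  set M := ∑ x ∈ G, mu n p x with hM
  have hzero : ∑ j ∈ Finset.range t, bb p t j *
      (∑ x ∈ G, ∑ y ∈ G, (mu n p x * mu n p y) *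
        (∑ W ∈ Finset.powersetCard j (Finset.univ : Finset (Fin n)),
          (∏ i ∈ W, base p x y i) * ∏ i ∈ Finset.univ \ W, (1 + ss p * base p x y i))) = 0 := by
    apply Finset.sum_eq_zero
    intro j hj
    rw [Zj_zero hp0 hq G hG (Finset.mem_range.mp hj), mul_zero]
  have hfour : ∑ j ∈ Finset.range t, bb p t j *
      (∑ x ∈ G, ∑ y ∈ G, (mu n p x * mu n p y) *
        (∑ W ∈ Finset.powersetCard j (Finset.univ : Finset (Fin n)),
          (∏ i ∈ W, base p x y i) * ∏ i ∈ Finset.univ \ W, (1 + ss p * base p x y i)))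
      = ∑ S : Finset (Fin n), ((p*(1-p))⁻¹)^S.card * (cS p G S)^2 * Lam p t S.card := by
    rw [Finset.sum_congr rfl (fun j (_ : j ∈ Finset.range t) => by rw [Zj_fourier hp0 hq G j])]
    rw [Finset.sum_congr rfl (fun j (_ : j ∈ Finset.range t) => Finset.mul_sum _ _ _)]
    rw [Finset.sum_comm]
    apply Finset.sum_congr rfl
    intro S _
    unfold Lam
    rw [Finset.mul_sum, Finset.mul_sum]
    apply Finset.sum_congr rfl
    intro j _
    ring
  have hmain : ∑ S : Finset (Fin n),
      ((p*(1-p))⁻¹)^S.card * (cS p G S)^2 * Lam p t S.card = 0 := by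
    rw [← hfour]; exact hzero
  have hpars := parseval hp0 hq G
  have hcS0 : cS p G ∅ = M := by
    unfold cS
    rw [hM]
    apply Finset.sum_congr rfl
    intro x _
    rw [Finset.prod_empty, mul_one]
  have hLam0 : Lam p t 0 = 1 := Lam_zero hp0 hq ht
  have hub : ∀ S ∈ Finset.univ.erase (∅ : Finset (Fin n)),
      -(nu p t) * (((p*(1-p))⁻¹)^S.card * (cS p G S)^2)
        ≤ ((p*(1-p))⁻¹)^S.card * (cS p G S)^2 * Lam p t S.card := by
    intro S hS
    have hSne : S ≠ ∅ := (Finset.mem_erase.mp hS).1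
    have hcard : 1 ≤ S.card := Finset.card_pos.mpr (Finset.nonempty_iff_ne_empty.mpr hSne)
    have hAnn : 0 ≤ ((p*(1-p))⁻¹)^S.card * (cS p G S)^2 := by positivity
    have hL := Lam_ge hp0 ht hpt hcard
    have := mul_le_mul_of_nonneg_left hL hAnn
    nlinarith [this]
  have hAsum : ∑ S ∈ Finset.univ.erase (∅ : Finset (Fin n)),
      ((p*(1-p))⁻¹)^S.card * (cS p G S)^2 = M - M^2 := by
    rw [Finset.sum_erase_eq_sub (Finset.mem_univ (∅ : Finset (Fin n))), hpars]
    simp only [Finset.card_empty, pow_zero, one_mul, hcS0]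
    try ring
  have hescale : ∑ S ∈ Finset.univ.erase (∅ : Finset (Fin n)),
      -(nu p t) * (((p*(1-p))⁻¹)^S.card * (cS p G S)^2) = -(nu p t) * (M - M^2) := by
    rw [← Finset.mul_sum, hAsum]
  have hlow := Finset.sum_le_sum hub
  rw [hescale] at hlow
  have hErase : ∑ S ∈ Finset.univ.erase (∅ : Finset (Fin n)),
      ((p*(1-p))⁻¹)^S.card * (cS p G S)^2 * Lam p t S.card = -(M^2) := by
    rw [Finset.sum_erase_eq_sub (Finset.mem_univ (∅ : Finset (Fin n))), hmain]
    simp only [Finset.card_empty, pow_zero, one_mul, hcS0, hLam0, mul_one]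
    try ring
  rw [hErase] at hlow
  have hM2 : M^2 ≤ nu p t * (M - M^2) := by linarith
  have hMnn : 0 ≤ M := Finset.sum_nonneg (fun x _ => le_of_lt (mu_pos hp0 hq x))
  have hnu_eq : nu p t * (1 - p^t) = p^t := by
    have hne : (1:ℝ) - p^t ≠ 0 := by linarith
    unfold nu
    rw [div_mul_cancel₀ _ hne]
  have h3 : M^2 * (1-p^t) ≤ (nu p t * (M - M^2)) * (1-p^t) :=
    mul_le_mul_of_nonneg_right hM2 (by linarith)
  have h4 : (nu p t * (M - M^2)) * (1-p^t) = p^t * (M - M^2) := by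
    rw [show (nu p t * (M - M^2)) * (1-p^t) = (nu p t * (1-p^t)) * (M - M^2) from by ring,
      hnu_eq]
  have h34 := h3.trans (le_of_eq h4)
  have h5 : M^2 ≤ p^t * M := by nlinarith [h34]
  rcases eq_or_lt_of_le hMnn with h0 | hMpos
  · rw [← h0]
    positivity
  · have h6 : M * M ≤ p^t * M := by nlinarith [h5]
    exact (mul_le_mul_iff_of_pos_right hMpos).mp h6


end comb
end Stmt13

/-- For t ≥ 1 and 0 < p < 1/(t+1), if F is a t-intersecting family of subsets of [n]
and F' is its upward closure, then μ_p(F') ≤ p^t: a p-biased subset of [n] contains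
some member of F with probability at most p^t. -/
theorem stmt_13 (t : ℕ) (ht : 1 ≤ t) (p : ℝ) (hp0 : 0 < p) (hp : p < 1 / (t + 1))
    (n : ℕ) (F : Finset (Finset (Fin n)))
    (hF : ∀ A ∈ F, ∀ B ∈ F, t ≤ (A ∩ B).card) :
    ∑ T ∈ Finset.univ.filter (fun T : Finset (Fin n) => ∃ S ∈ F, S ⊆ T),
      p ^ T.card * (1 - p) ^ (n - T.card) ≤ p ^ t := by
  classical
  have ht1 : (0:ℝ) < (t:ℝ) + 1 := by positivity
  have hpt : p * ((t:ℝ) + 1) ≤ 1 := le_of_lt ((lt_div_iff₀ ht1).mp hp)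
  set G := Finset.univ.filter (fun T : Finset (Fin n) => ∃ S ∈ F, S ⊆ T) with hGdef
  have hG : ∀ x ∈ G, ∀ y ∈ G, t ≤ (x ∩ y).card := by
    intro x hx y hy
    obtain ⟨Sx, hSxF, hSx⟩ := (Finset.mem_filter.mp hx).2
    obtain ⟨Sy, hSyF, hSy⟩ := (Finset.mem_filter.mp hy).2
    calc t ≤ (Sx ∩ Sy).card := hF Sx hSxF Sy hSyF
      _ ≤ (x ∩ y).card := Finset.card_le_card (Finset.inter_subset_inter hSx hSy)
  have hmb := Stmt13.measure_bound t ht hp0 hpt G hG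
  have heq : ∑ T ∈ G, p ^ T.card * (1 - p) ^ (n - T.card) = ∑ x ∈ G, Stmt13.mu n p x :=
    Finset.sum_congr rfl (fun T _ => rfl)
  rw [heq]
  exact hmb
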